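/- Let D be a DAG on n ≥ 3 vertices whose skeleton is the path v1 — v2 — ... — vn. Let D' be the DAG whose skeleton is the path v2 — v1 — v3 — v4 — ... — vn, oriented so that the set of colliders of D' equals C(D) \ {v2} (where C(D) is the set of colliders of D). Then the d-separation distance between D and D' is exactly 2^(n-1) - 2. -/

import Mathlib

/-- A directed graph on `Fin n` is a binary relation; it is a DAG when it has no
directed cycle. -/
def IsDAG {n : ℕ} (D : Fin n → Fin n → Prop) : Prop :=
  ∀ v, ¬ Relation.TransGen D v v

/-- The skeleton (underlying undirected graph) of a directed graph. -/
def Skel {n : ℕ} (D : Fin n → Fin n → Prop) : SimpleGraph (Fin n) where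
  Adj a b := a ≠ b ∧ (D a b ∨ D b a)
  symm := ⟨fun a b h => ⟨h.1.symm, h.2.symm⟩⟩
  loopless := ⟨fun a h => h.1 rfl⟩

/-- `y` is a descendant of `x` (including `x` itself). -/
def Desc {n : ℕ} (D : Fin n → Fin n → Prop) (x y : Fin n) : Prop :=
  Relation.ReflTransGen D x y

/-- A path (in the skeleton) from `u` to `v`, as a list of distinct vertices with
consecutive vertices adjacent in the skeleton. -/
def IsSkelPath {n : ℕ} (D : Fin n → Fin n → Prop) (u v : Fin n) (p : List (Fin n)) : Prop :=
  p.Nodup ∧ p.head? = some u ∧ p.getLast? = some v ∧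
    p.Chain' (fun a b => D a b ∨ D b a)

/-- Position `i` of the list `p` is a collider: both neighboring arcs point into it. -/
def ColliderAt {n : ℕ} [NeZero n] (D : Fin n → Fin n → Prop) (p : List (Fin n)) (i : ℕ) : Prop :=
  D (p.getD (i - 1) default) (p.getD i default) ∧ D (p.getD (i + 1) default) (p.getD i default)

/-- The path `p` is blocked by `Z`: some internal position is a non-collider in `Z`,
or a collider none of whose descendants (including itself) lies in `Z`. -/
def Blocked {n : ℕ} [NeZero n] (D : Fin n → Fin n → Prop) (Z : Finset (Fin n))
    (p : List (Fin n)) : Prop :=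
  ∃ i : ℕ, 0 < i ∧ i + 1 < p.length ∧
    ((¬ ColliderAt D p i ∧ p.getD i default ∈ Z) ∨
      (ColliderAt D p i ∧ ∀ w, Desc D (p.getD i default) w → w ∉ Z))

/-- `u` and `v` are d-separated given `Z` in `D`. -/
def DSep {n : ℕ} [NeZero n] (D : Fin n → Fin n → Prop) (u v : Fin n)
    (Z : Finset (Fin n)) : Prop :=
  ∀ p : List (Fin n), IsSkelPath D u v p → Blocked D Z p

/-- The d-separation distance between two directed graphs on `Fin n`: the number of
triples `(u, v, Z)` with `u < v` and `Z ⊆ V \ {u, v}` on which their d-separation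
relations differ. -/
noncomputable def dSepDist {n : ℕ} [NeZero n] (D₁ D₂ : Fin n → Fin n → Prop) : ℕ :=
  Set.ncard {t : Fin n × Fin n × Finset (Fin n) |
    t.1 < t.2.1 ∧ t.1 ∉ t.2.2 ∧ t.2.1 ∉ t.2.2 ∧
    ¬ (DSep D₁ t.1 t.2.1 t.2.2 ↔ DSep D₂ t.1 t.2.1 t.2.2)}

/-- A vertex is a collider (of a DAG with a path skeleton) if it has two distinct
parents. -/
def IsColliderVertex {n : ℕ} (D : Fin n → Fin n → Prop) (k : Fin n) : Prop :=
  ∃ a b, a ≠ b ∧ D a k ∧ D b k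

/-- Two directed graphs entail the same d-separation relations. -/
def MarkovEquiv {n : ℕ} [NeZero n] (D₁ D₂ : Fin n → Fin n → Prop) : Prop :=
  ∀ (u v : Fin n) (Z : Finset (Fin n)), u ≠ v → u ∉ Z → v ∉ Z →
    (DSep D₁ u v Z ↔ DSep D₂ u v Z)

namespace SwapAux

open Finset

variable {n : ℕ} [NeZero n]

/-- Adjacency of `D` matches the linear order given by `e`. -/
def Hadj (D : Fin n → Fin n → Prop) (e : Fin n ≃ Fin n) : Prop :=
  ∀ a b : Fin n, (D a b ∨ D b a) ↔
    ((e a).val + 1 = (e b).val ∨ (e b).val + 1 = (e a).val)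

def Hasym (D : Fin n → Fin n → Prop) : Prop := ∀ a b : Fin n, D a b → ¬ D b a

variable {D : Fin n → Fin n → Prop} {e : Fin n ≃ Fin n}

lemma inj_e {x y : Fin n} (h : (e x).val = (e y).val) : x = y :=
  e.injective (Fin.ext h)

lemma arc_adj (hadj : Hadj D e) {a b : Fin n} (h : D a b) :
    (e a).val + 1 = (e b).val ∨ (e b).val + 1 = (e a).val :=
  (hadj a b).1 (Or.inl h)

lemma collider_parents (hadj : Hadj D e) {k : Fin n} (hk : IsColliderVertex D k) :
    ∀ x, ((e x).val + 1 = (e k).val ∨ (e k).val + 1 = (e x).val) → D x k := by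
  obtain ⟨a, b, hab, hak, hbk⟩ := hk
  have ha := arc_adj hadj hak
  have hb := arc_adj hadj hbk
  have hι : (e a).val ≠ (e b).val := fun h => hab (inj_e h)
  intro x hx
  have hxa : x = a ∨ x = b := by
    rcases hx with hx | hx <;> rcases ha with ha | ha <;> rcases hb with hb | hb
    · omega
    · left; have h : (e x).val = (e a).val := by omega
      exact inj_e h
    · right; have h : (e x).val = (e b).val := by omega
      exact inj_e h
    · omega
    · omega
    · right; have h : (e x).val = (e b).val := by omega
      exact inj_e h
    · left; have h : (e x).val = (e a).val := by omega
      exact inj_e h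
    · omega
  rcases hxa with rfl | rfl <;> assumption

lemma collider_sink (hadj : Hadj D e) (hasym : Hasym D) {k : Fin n}
    (hk : IsColliderVertex D k) : ∀ x, ¬ D k x := by
  intro x hx
  have h := arc_adj hadj hx
  exact hasym x k (collider_parents hadj hk x (by tauto)) hx

lemma collider_desc (hadj : Hadj D e) (hasym : Hasym D) {k w : Fin n}
    (hk : IsColliderVertex D k) (hd : Desc D k w) : w = k := by
  rcases hd.cases_head with h | ⟨c, hc, _⟩
  · exact h.symm
  · exact absurd hc (collider_sink hadj hasym hk c)

lemma no_collider_zero (hadj : Hadj D e) {k : Fin n} (hk : (e k).val = 0) :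
    ¬ IsColliderVertex D k := by
  rintro ⟨a, b, hab, hak, hbk⟩
  have ha := arc_adj hadj hak
  have hb := arc_adj hadj hbk
  have h : (e a).val = (e b).val := by omega
  exact hab (inj_e h)

lemma run_incr (g : ℕ → ℕ) (m : ℕ)
    (steps : ∀ j, j + 1 < m → g (j + 1) = g j + 1 ∨ g j = g (j + 1) + 1)
    (inj : ∀ j k, j < m → k < m → g j = g k → j = k)
    (hlt : g 0 < g (m - 1)) : ∀ j, j < m → g j = g 0 + j := by
  have hm2 : 2 ≤ m := by
    by_contra h
    have hm : m - 1 = 0 := by omega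
    rw [hm] at hlt
    omega
  rcases steps 0 (by omega) with h0 | h0
  · have key : ∀ j, j + 1 < m → g (j + 1) = g j + 1 := by
      intro j
      induction j with
      | zero => intro _; exact h0
      | succ i ih =>
        intro hj
        have h1 : g (i + 1) = g i + 1 := ih (by omega)
        rcases steps (i + 1) (by omega) with h | h
        · exact h
        · exfalso
          have h2 : g (i + 1 + 1) = g i := by omega
          have := inj (i + 1 + 1) i (by omega) (by omega) h2
          omega
    intro j
    induction j with
    | zero => intro _; omega
    | succ i ih =>
      intro hj
      have := ih (by omega)
      have := key i (by omega)
      omega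
  · exfalso
    have key : ∀ j, j + 1 < m → g j = g (j + 1) + 1 := by
      intro j
      induction j with
      | zero => intro _; exact h0
      | succ i ih =>
        intro hj
        have h1 : g i = g (i + 1) + 1 := ih (by omega)
        rcases steps (i + 1) (by omega) with h | h
        · exfalso
          have h2 : g (i + 1 + 1) = g i := by omega
          have := inj (i + 1 + 1) i (by omega) (by omega) h2
          omega
        · exact h
    have hdec : ∀ j, j < m → g j + j = g 0 := by
      intro j
      induction j with
      | zero => intro _; omega
      | succ i ih =>
        intro hj
        have := ih (by omega)
        have := key i (by omega)
        omega
    have := hdec (m - 1) (by omega)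
    omega

lemma path_struct (hadj : Hadj D e) {u v : Fin n} {p : List (Fin n)}
    (hp : IsSkelPath D u v p) (hlt : (e u).val < (e v).val) :
    p.length = (e v).val - (e u).val + 1 ∧
      ∀ j, j < p.length → (e (p.getD j default)).val = (e u).val + j := by
  obtain ⟨hnd, hhead, hlast, hchain⟩ := hp
  have hlen : 0 < p.length := by
    cases p with
    | nil => simp at hhead
    | cons a t => simp
  have h0 : p.getD 0 default = u := by
    cases p with
    | nil => simp at hhead
    | cons a t =>
      simp only [List.head?_cons, Option.some.injEq] at hhead
      simp [hhead]
  have hlastv : p.getD (p.length - 1) default = v := by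
    rw [List.getD_eq_getElem?_getD, ← List.getLast?_eq_getElem?, hlast]
    rfl
  set g : ℕ → ℕ := fun j => (e (p.getD j default)).val with hg
  have steps : ∀ j, j + 1 < p.length → g (j + 1) = g j + 1 ∨ g j = g (j + 1) + 1 := by
    intro j hj
    have hc := (List.isChain_iff_getElem.1 hchain) j (by omega)
    have := (hadj _ _).1 hc
    simp only [hg]
    rw [List.getD_eq_getElem _ _ (by omega : j < p.length),
      List.getD_eq_getElem _ _ (by omega : j + 1 < p.length)]
    omega
  have inj : ∀ j k, j < p.length → k < p.length → g j = g k → j = k := by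
    intro j k hj hk hjk
    have h1 : p.getD j default = p.getD k default := inj_e hjk
    rw [List.getD_eq_getElem _ _ hj, List.getD_eq_getElem _ _ hk] at h1
    have := (hnd.getElem_inj_iff).1 h1
    exact this
  have hlt' : g 0 < g (p.length - 1) := by
    simp only [hg, h0, hlastv]
    exact hlt
  have hrun := run_incr g p.length steps inj hlt'
  have hlast' := hrun (p.length - 1) (by omega)
  simp only [hg, h0, hlastv] at hlast'
  constructor
  · omega
  · intro j hj
    have := hrun j hj
    simpa only [hg, h0] using this

/-- The canonical skeleton path from `u` to `v` when `(e u).val < (e v).val`. -/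
noncomputable def canon (e : Fin n ≃ Fin n) (u v : Fin n) : List (Fin n) :=
  List.ofFn (fun j : Fin ((e v).val - (e u).val + 1) =>
    e.symm ⟨(e u).val + j.val, by have := j.isLt; have := (e v).isLt; omega⟩)

lemma canon_length (u v : Fin n) : (canon e u v).length = (e v).val - (e u).val + 1 := by
  simp [canon]

lemma canon_getD {u v : Fin n} {j : ℕ} (hj : j < (canon e u v).length) :
    (e ((canon e u v).getD j default)).val = (e u).val + j := by
  rw [canon_length] at hj
  have h : (canon e u v).getD j default =
      e.symm ⟨(e u).val + j, by have := (e v).isLt; omega⟩ := by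
    rw [List.getD_eq_getElem?_getD, canon, List.getElem?_ofFn]
    simp [List.ofFnNthVal, hj]
  rw [h]
  simp

lemma canon_isSkelPath (hadj : Hadj D e) {u v : Fin n} (hlt : (e u).val < (e v).val) :
    IsSkelPath D u v (canon e u v) := by
  have hlen := canon_length (e := e) u v
  refine ⟨?_, ?_, ?_, ?_⟩
  · rw [canon, List.nodup_ofFn]
    intro a b hab
    have := congrArg (fun x => (e x).val) hab
    simp at this
    exact Fin.ext this
  · have h0 : 0 < (canon e u v).length := by omega
    have h00 : (canon e u v).getD 0 default = u := by
      apply inj_e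
      rw [canon_getD h0]
      omega
    rw [List.head?_eq_getElem?, List.getElem?_eq_getElem h0,
      ← List.getD_eq_getElem _ default h0, h00]
  · have h0 : (canon e u v).length - 1 < (canon e u v).length := by omega
    have h00 : (canon e u v).getD ((canon e u v).length - 1) default = v := by
      apply inj_e
      rw [canon_getD h0]
      omega
    rw [List.getLast?_eq_getElem?, List.getElem?_eq_getElem h0,
      ← List.getD_eq_getElem _ default h0, h00]
  · rw [List.Chain', List.isChain_iff_getElem]
    intro i hi
    apply (hadj _ _).2
    left
    have h1 : (e ((canon e u v).getD i default)).val = (e u).val + i :=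
      canon_getD (by omega)
    have h2 : (e ((canon e u v).getD (i + 1) default)).val = (e u).val + (i + 1) :=
      canon_getD (by omega)
    rw [List.getD_eq_getElem _ _ (by omega)] at h1
    rw [List.getD_eq_getElem _ _ (by omega)] at h2
    omega

theorem dsep_char (hadj : Hadj D e) (hasym : Hasym D) {u v : Fin n} {Z : Finset (Fin n)}
    (hlt : (e u).val < (e v).val) :
    DSep D u v Z ↔
      ¬ ∀ k : Fin n, (e u).val < (e k).val → (e k).val < (e v).val →
        (k ∈ Z ↔ IsColliderVertex D k) := by
  constructor
  · intro hd hconn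
    have hsp := canon_isSkelPath hadj hlt
    obtain ⟨i, hi0, hi1, hcase⟩ := hd _ hsp
    rw [canon_length] at hi1
    have hιk : (e ((canon e u v).getD i default)).val = (e u).val + i :=
      canon_getD (by rw [canon_length]; omega)
    have hprev : (e ((canon e u v).getD (i - 1) default)).val = (e u).val + (i - 1) :=
      canon_getD (by rw [canon_length]; omega)
    have hnext : (e ((canon e u v).getD (i + 1) default)).val = (e u).val + (i + 1) :=
      canon_getD (by rw [canon_length]; omega)
    have hkZ := hconn ((canon e u v).getD i default) (by omega) (by omega)
    have hcoll_iff : ColliderAt D (canon e u v) i ↔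
        IsColliderVertex D ((canon e u v).getD i default) := by
      constructor
      · rintro ⟨h1, h2⟩
        refine ⟨_, _, ?_, h1, h2⟩
        intro h
        have := congrArg (fun x => (e x).val) h
        omega
      · intro hk'
        exact ⟨collider_parents hadj hk' _ (Or.inl (by omega)),
          collider_parents hadj hk' _ (Or.inr (by omega))⟩
    rcases hcase with ⟨hnc, hmem⟩ | ⟨hca, hall⟩
    · exact hnc (hcoll_iff.2 (hkZ.1 hmem))
    · exact hall _ Relation.ReflTransGen.refl (hkZ.2 (hcoll_iff.1 hca))
  · intro hviol p hp
    push_neg at hviol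
    obtain ⟨k, hk1, hk2, hkiff⟩ := hviol
    obtain ⟨hplen, hpval⟩ := path_struct hadj hp hlt
    have him : ((e k).val - (e u).val) + 1 < p.length := by omega
    have hpi : p.getD ((e k).val - (e u).val) default = k := by
      apply inj_e (e := e)
      have h := hpval ((e k).val - (e u).val) (by omega)
      omega
    refine ⟨(e k).val - (e u).val, by omega, him, ?_⟩
    have hprev : (e (p.getD (((e k).val - (e u).val) - 1) default)).val
        = (e u).val + (((e k).val - (e u).val) - 1) := hpval _ (by omega)
    have hnext : (e (p.getD (((e k).val - (e u).val) + 1) default)).val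
        = (e u).val + (((e k).val - (e u).val) + 1) := hpval _ (by omega)
    by_cases hcol : IsColliderVertex D k
    · right
      have hkz : k ∉ Z := by
        rcases hkiff with ⟨_, hnc⟩ | ⟨hz, _⟩
        · exact absurd hcol hnc
        · exact hz
      constructor
      · show D _ (p.getD ((e k).val - (e u).val) default) ∧
          D _ (p.getD ((e k).val - (e u).val) default)
        rw [hpi]
        exact ⟨collider_parents hadj hcol _ (Or.inl (by omega)),
          collider_parents hadj hcol _ (Or.inr (by omega))⟩
      · intro w hw
        rw [hpi] at hw
        have hwk : w = k := collider_desc hadj hasym hcol hw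
        subst hwk
        exact hkz
    · left
      have hkz : k ∈ Z := by
        rcases hkiff with ⟨hz, _⟩ | ⟨_, hc⟩
        · exact hz
        · exact absurd hc hcol
      constructor
      · rintro ⟨h1, h2⟩
        rw [hpi] at h1 h2
        apply hcol
        refine ⟨_, _, ?_, h1, h2⟩
        intro h
        have := congrArg (fun x => (e x).val) h
        omega
      · rw [hpi]
        exact hkz

lemma not_dsep_adj (hadj : Hadj D e) {u v : Fin n}
    (h : (e u).val + 1 = (e v).val ∨ (e v).val + 1 = (e u).val)
    (Z : Finset (Fin n)) : ¬ DSep D u v Z := by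
  intro hd
  have hne : u ≠ v := by
    intro h'
    subst h'
    omega
  have hsp : IsSkelPath D u v [u, v] := by
    refine ⟨by simp [hne], by simp, by simp, ?_⟩
    simp only [List.Chain', List.isChain_cons_cons, List.isChain_singleton, and_true]
    exact (hadj u v).2 h
  obtain ⟨i, hi0, hi1, _⟩ := hd _ hsp
  simp at hi1
  omega

lemma card_forced (F F₀ : Finset (Fin n)) (hsub : F₀ ⊆ F) :
    (Finset.univ.filter fun Z : Finset (Fin n) => Z ∩ F = F₀).card = 2 ^ (n - F.card) := by
  classical
  have hcard : (Finset.univ.filter fun Z : Finset (Fin n) => Z ∩ F = F₀).card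
      = Fᶜ.powerset.card := by
    refine Finset.card_bij' (fun Z _ => Z \ F) (fun W _ => W ∪ F₀) ?_ ?_ ?_ ?_
    · intro Z hZ
      rw [Finset.mem_powerset]
      intro x hx
      rw [Finset.mem_sdiff] at hx
      simp [hx.2]
    · intro W hW
      rw [Finset.mem_powerset] at hW
      simp only [Finset.mem_filter, Finset.mem_univ, true_and]
      ext x
      simp only [Finset.mem_inter, Finset.mem_union]
      constructor
      · rintro ⟨hx1 | hx1, hx2⟩
        · exact absurd hx2 (by simpa using hW hx1)
        · exact hx1
      · intro hx
        exact ⟨Or.inr hx, hsub hx⟩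
    · intro Z hZ
      rw [Finset.mem_filter] at hZ
      show Z \ F ∪ F₀ = Z
      rw [← hZ.2, Finset.sdiff_union_inter]
    · intro W hW
      rw [Finset.mem_powerset] at hW
      ext x
      simp only [Finset.mem_sdiff, Finset.mem_union]
      constructor
      · rintro ⟨hx1 | hx1, hx2⟩
        · exact hx1
        · exact absurd (hsub hx1) hx2
      · intro hx
        exact ⟨Or.inl hx, by simpa using hW hx⟩
  rw [hcard, Finset.card_powerset, Finset.card_compl, Fintype.card_fin]

lemma card_le_filter (v : Fin n) :
    (Finset.univ.filter fun j : Fin n => j.val ≤ v.val).card = v.val + 1 := by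
  have h : (Finset.univ.filter fun j : Fin n => j.val ≤ v.val)
      = Finset.attachFin (Finset.range (v.val + 1))
        (fun m hm => by rw [Finset.mem_range] at hm; have := v.isLt; omega) := by
    ext j
    simp [Finset.mem_attachFin, Finset.mem_range]
  rw [h, Finset.card_attachFin, Finset.card_range]

lemma geo_sum : ∀ m : ℕ, ∑ j ∈ Finset.range m, 2 ^ j = 2 ^ m - 1 := by
  intro m
  induction m with
  | zero => simp
  | succ i ih =>
    rw [Finset.sum_range_succ, ih]
    have h1 : 1 ≤ 2 ^ i := Nat.one_le_two_pow
    have h2 : 2 ^ (i + 1) = 2 ^ i * 2 := pow_succ 2 i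
    omega

end SwapAux

set_option maxHeartbeats 2000000 in
open Finset in
theorem swapped_path_dag_distance {n : ℕ} [NeZero n] (hn : 3 ≤ n)
    (D D' : Fin n → Fin n → Prop) (hD : IsDAG D) (hD' : IsDAG D')
    (hskel : Skel D = SimpleGraph.pathGraph n)
    (hskel' : Skel D' = (SimpleGraph.pathGraph n).comap
      ⇑(Equiv.swap (⟨0, by omega⟩ : Fin n) ⟨1, by omega⟩))
    (hcol : ∀ k : Fin n, IsColliderVertex D' k ↔
      (IsColliderVertex D k ∧ k ≠ ⟨1, by omega⟩)) :
    dSepDist D D' = 2 ^ (n - 1) - 2 := by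
  classical
  set z : Fin n := ⟨0, by omega⟩ with hzdef
  set o : Fin n := ⟨1, by omega⟩ with hodef
  set σ : Equiv.Perm (Fin n) := Equiv.swap z o with hσdef
  have hz0 : z.val = 0 := by rw [hzdef]
  have ho1 : o.val = 1 := by rw [hodef]
  have hzo : z ≠ o := by
    intro h
    rw [Fin.ext_iff, hz0, ho1] at h
    omega
  have hirr : ∀ a, ¬ D a a := fun a h => hD a (Relation.TransGen.single h)
  have hirr' : ∀ a, ¬ D' a a := fun a h => hD' a (Relation.TransGen.single h)
  have hasymD : SwapAux.Hasym D := fun a b h h' =>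
    hD a ((Relation.TransGen.single h).trans (Relation.TransGen.single h'))
  have hasymD' : SwapAux.Hasym D' := fun a b h h' =>
    hD' a ((Relation.TransGen.single h).trans (Relation.TransGen.single h'))
  have hadjD : SwapAux.Hadj D (Equiv.refl (Fin n)) := by
    intro a b
    constructor
    · intro h
      have hne : a ≠ b := by rintro rfl; rcases h with h | h <;> exact hirr a h
      have hAdj : (Skel D).Adj a b := (show a ≠ b ∧ (D a b ∨ D b a) from ⟨hne, h⟩)
      rw [hskel] at hAdj
      exact SimpleGraph.pathGraph_adj.1 hAdj
    · intro h
      have hAdj : (Skel D).Adj a b := by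
        rw [hskel]
        exact SimpleGraph.pathGraph_adj.2 h
      exact (show a ≠ b ∧ (D a b ∨ D b a) from hAdj).2
  have hadjD' : SwapAux.Hadj D' σ := by
    intro a b
    constructor
    · intro h
      have hne : a ≠ b := by rintro rfl; rcases h with h | h <;> exact hirr' a h
      have hAdj : (Skel D').Adj a b := (show a ≠ b ∧ (D' a b ∨ D' b a) from ⟨hne, h⟩)
      rw [hskel'] at hAdj
      exact SimpleGraph.pathGraph_adj.1 hAdj
    · intro h
      have hAdj : (Skel D').Adj a b := by
        rw [hskel']
        exact SimpleGraph.pathGraph_adj.2 h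
      exact (show a ≠ b ∧ (D' a b ∨ D' b a) from hAdj).2
  have hσz : (σ z).val = 1 := by rw [hσdef]; rw [Equiv.swap_apply_left]
  have hσo : (σ o).val = 0 := by rw [hσdef]; rw [Equiv.swap_apply_right]
  have hval0 : ∀ k : Fin n, k.val = 0 → k = z := fun k h => Fin.ext (h.trans hz0.symm)
  have hval1 : ∀ k : Fin n, k.val = 1 → k = o := fun k h => Fin.ext (h.trans ho1.symm)
  have hσk : ∀ k : Fin n, 2 ≤ k.val → (σ k).val = k.val := by
    intro k hk
    rw [hσdef]
    rw [Equiv.swap_apply_of_ne_of_ne]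
    · intro h; rw [h, hz0] at hk; omega
    · intro h; rw [h, ho1] at hk; omega
  have hncz : ¬ IsColliderVertex D z :=
    SwapAux.no_collider_zero hadjD (show ((Equiv.refl (Fin n)) z).val = 0 from hz0)
  have hcolD' : ∀ k, IsColliderVertex D' k ↔ (IsColliderVertex D k ∧ k ≠ o) :=
    fun k => hcol k
  have hcharD : ∀ (u v : Fin n) (Z : Finset (Fin n)), u.val < v.val →
      (DSep D u v Z ↔ ¬ ∀ k : Fin n, u.val < k.val → k.val < v.val →
        (k ∈ Z ↔ IsColliderVertex D k)) :=
    fun u v Z h => SwapAux.dsep_char hadjD hasymD h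
  have hcharD' : ∀ (u v : Fin n) (Z : Finset (Fin n)), (σ u).val < (σ v).val →
      (DSep D' u v Z ↔ ¬ ∀ k : Fin n, (σ u).val < (σ k).val → (σ k).val < (σ v).val →
        (k ∈ Z ↔ IsColliderVertex D' k)) :=
    fun u v Z h => SwapAux.dsep_char hadjD' hasymD' h
  have hDzo : ∀ Z, ¬ DSep D z o Z := fun Z =>
    SwapAux.not_dsep_adj hadjD
      (Or.inl (show ((Equiv.refl (Fin n)) z).val + 1 = ((Equiv.refl (Fin n)) o).val by
        show z.val + 1 = o.val
        rw [hz0, ho1])) Z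
  have hD'zo : ∀ Z, ¬ DSep D' z o Z := fun Z =>
    SwapAux.not_dsep_adj hadjD' (Or.inr (show (σ o).val + 1 = (σ z).val by rw [hσo, hσz])) Z
  set RR : Fin n → Finset (Fin n) → Prop := fun v Z =>
    ∀ k : Fin n, 2 ≤ k.val → k.val < v.val → (k ∈ Z ↔ IsColliderVertex D k) with hRRdef
  have hCDz : ∀ (u v : Fin n) (Z : Finset (Fin n)), u.val = 0 → 2 ≤ v.val →
      ((∀ k : Fin n, u.val < k.val → k.val < v.val → (k ∈ Z ↔ IsColliderVertex D k)) ↔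
        (RR v Z ∧ (o ∈ Z ↔ IsColliderVertex D o))) := by
    intro u v Z hu hv
    constructor
    · intro H
      exact ⟨fun k h2 hlt => H k (by omega) hlt, H o (by omega) (by omega)⟩
    · rintro ⟨hR, ho⟩ k h0 hv'
      by_cases hk : k.val = 1
      · rw [hval1 k hk]; exact ho
      · exact hR k (by omega) hv'
  have hCD'z : ∀ (u v : Fin n) (Z : Finset (Fin n)), u.val = 0 → 2 ≤ v.val →
      ((∀ k : Fin n, (σ u).val < (σ k).val → (σ k).val < (σ v).val →
        (k ∈ Z ↔ IsColliderVertex D' k)) ↔ RR v Z) := by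
    intro u v Z hu hv
    have hσu : (σ u).val = 1 := by rw [hval0 u hu]; exact hσz
    have hσv : (σ v).val = v.val := hσk v hv
    constructor
    · intro H k h2 hlt
      have hko : k ≠ o := by intro h; rw [h, ho1] at h2; omega
      have hσkk : (σ k).val = k.val := hσk k h2
      have hthis := H k (by omega) (by omega)
      rw [hcolD' k] at hthis
      exact ⟨fun hkZ => (hthis.1 hkZ).1, fun hc => hthis.2 ⟨hc, hko⟩⟩
    · intro hR k h1 h2
      by_cases hkz : k = z
      · exfalso; rw [hkz, hσz] at h1; omega
      · by_cases hko : k = o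
        · exfalso; rw [hko, hσo] at h1; omega
        · have hk2 : 2 ≤ k.val := by
            have h0' : k.val ≠ 0 := fun h => hkz (hval0 k h)
            have h1' : k.val ≠ 1 := fun h => hko (hval1 k h)
            omega
          have hσkk := hσk k hk2
          rw [hcolD' k]
          have hthis := hR k hk2 (by omega)
          exact ⟨fun hkZ => ⟨hthis.1 hkZ, hko⟩, fun hc => hthis.2 hc.1⟩
  have hCDo : ∀ (u v : Fin n) (Z : Finset (Fin n)), u.val = 1 →
      ((∀ k : Fin n, u.val < k.val → k.val < v.val → (k ∈ Z ↔ IsColliderVertex D k)) ↔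
        RR v Z) := by
    intro u v Z hu
    constructor
    · intro H k h2 hlt; exact H k (by omega) hlt
    · intro H k h1 hlt; exact H k (by omega) hlt
  have hCD'o : ∀ (u v : Fin n) (Z : Finset (Fin n)), u.val = 1 → 2 ≤ v.val →
      ((∀ k : Fin n, (σ u).val < (σ k).val → (σ k).val < (σ v).val →
        (k ∈ Z ↔ IsColliderVertex D' k)) ↔ (RR v Z ∧ z ∉ Z)) := by
    intro u v Z hu hv
    have hσu : (σ u).val = 0 := by rw [hval1 u hu]; exact hσo
    have hσv : (σ v).val = v.val := hσk v hv
    constructor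
    · intro H
      constructor
      · intro k h2 hlt
        have hko : k ≠ o := by intro h; rw [h, ho1] at h2; omega
        have hσkk := hσk k h2
        have hthis := H k (by omega) (by omega)
        rw [hcolD' k] at hthis
        exact ⟨fun hkZ => (hthis.1 hkZ).1, fun hc => hthis.2 ⟨hc, hko⟩⟩
      · intro hzZ
        have hthis := H z (by rw [hσz]; omega) (by rw [hσz]; omega)
        rw [hcolD' z] at hthis
        exact absurd (hthis.1 hzZ).1 hncz
    · rintro ⟨hR, hznZ⟩ k h1 h2
      by_cases hkz : k = z
      · rw [hkz, hcolD' z]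
        exact ⟨fun h => absurd h hznZ, fun h => absurd h.1 hncz⟩
      · by_cases hko : k = o
        · exfalso; rw [hko, hσo] at h1; omega
        · have hk2 : 2 ≤ k.val := by
            have h0' : k.val ≠ 0 := fun h => hkz (hval0 k h)
            have h1' : k.val ≠ 1 := fun h => hko (hval1 k h)
            omega
          have hσkk := hσk k hk2
          rw [hcolD' k]
          have hthis := hR k hk2 (by omega)
          exact ⟨fun hkZ => ⟨hthis.1 hkZ, hko⟩, fun hc => hthis.2 hc.1⟩
  have hCDmid : ∀ (u v : Fin n) (Z : Finset (Fin n)), 2 ≤ u.val → u.val < v.val →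
      ((∀ k : Fin n, u.val < k.val → k.val < v.val → (k ∈ Z ↔ IsColliderVertex D k)) ↔
       (∀ k : Fin n, (σ u).val < (σ k).val → (σ k).val < (σ v).val →
        (k ∈ Z ↔ IsColliderVertex D' k))) := by
    intro u v Z hu huv
    have hσu : (σ u).val = u.val := hσk u hu
    have hσv : (σ v).val = v.val := hσk v (by omega)
    constructor
    · intro H k h1 h2
      by_cases hkz : k = z
      · exfalso; rw [hkz, hσz] at h1; omega
      · by_cases hko : k = o
        · exfalso; rw [hko, hσo] at h1; omega
        · have hk2 : 2 ≤ k.val := by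
            have h0' : k.val ≠ 0 := fun h => hkz (hval0 k h)
            have h1' : k.val ≠ 1 := fun h => hko (hval1 k h)
            omega
          have hσkk := hσk k hk2
          rw [hcolD' k]
          have hthis := H k (by omega) (by omega)
          exact ⟨fun hkZ => ⟨hthis.1 hkZ, hko⟩, fun hc => hthis.2 hc.1⟩
    · intro H k h1 h2
      have hk2 : 2 ≤ k.val := by omega
      have hko : k ≠ o := by intro h; rw [h, ho1] at hk2; omega
      have hσkk := hσk k hk2
      have hthis := H k (by omega) (by omega)
      rw [hcolD' k] at hthis
      exact ⟨fun hkZ => (hthis.1 hkZ).1, fun hc => hthis.2 ⟨hc, hko⟩⟩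
  set Q : Fin n × Fin n × Finset (Fin n) → Prop := fun t =>
    2 ≤ t.2.1.val ∧ t.1 ∉ t.2.2 ∧ t.2.1 ∉ t.2.2 ∧
      ((t.1 = z ∧ RR t.2.1 t.2.2 ∧ (o ∈ t.2.2 ↔ ¬ IsColliderVertex D o)) ∨
       (t.1 = o ∧ RR t.2.1 t.2.2 ∧ z ∈ t.2.2)) with hQdef
  have hmain : ∀ (u v : Fin n) (Z : Finset (Fin n)),
      (u < v ∧ u ∉ Z ∧ v ∉ Z ∧ ¬ (DSep D u v Z ↔ DSep D' u v Z)) ↔ Q (u, v, Z) := by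
    intro u v Z
    rw [hQdef]
    show _ ↔ (2 ≤ v.val ∧ u ∉ Z ∧ v ∉ Z ∧
      ((u = z ∧ RR v Z ∧ (o ∈ Z ↔ ¬ IsColliderVertex D o)) ∨
       (u = o ∧ RR v Z ∧ z ∈ Z)))
    constructor
    · rintro ⟨hlt, huZ, hvZ, hdiff⟩
      have hltv : u.val < v.val := hlt
      have hv2 : 2 ≤ v.val := by
        by_contra hcon
        have hu0 : u = z := hval0 u (by omega)
        have hv1 : v = o := hval1 v (by omega)
        rw [hu0, hv1] at hdiff
        exact hdiff (iff_of_false (hDzo Z) (hD'zo Z))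
      refine ⟨hv2, huZ, hvZ, ?_⟩
      rcases Nat.lt_or_ge u.val 2 with hu2 | hu2
      · rcases Nat.lt_or_ge u.val 1 with hu1 | hu1
        · have hu0 : u.val = 0 := by omega
          left
          refine ⟨hval0 u hu0, ?_⟩
          rw [hcharD u v Z hltv] at hdiff
          rw [hcharD' u v Z (by rw [hval0 u hu0, hσz, hσk v hv2]; omega)] at hdiff
          have h1 := hCDz u v Z hu0 hv2
          have h2 := hCD'z u v Z hu0 hv2
          tauto
        · have hu1' : u.val = 1 := by omega
          right
          refine ⟨hval1 u hu1', ?_⟩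
          rw [hcharD u v Z hltv] at hdiff
          rw [hcharD' u v Z (by rw [hval1 u hu1', hσo, hσk v hv2]; omega)] at hdiff
          have h1 := hCDo u v Z hu1'
          have h2 := hCD'o u v Z hu1' hv2
          tauto
      · exfalso
        rw [hcharD u v Z hltv] at hdiff
        rw [hcharD' u v Z (by rw [hσk u hu2, hσk v (by omega)]; omega)] at hdiff
        have h1 := hCDmid u v Z hu2 hltv
        tauto
    · rintro ⟨hv2, huZ, hvZ, hQ'⟩
      rcases hQ' with ⟨hu, hR, hiff⟩ | ⟨hu, hR, hzZ⟩
      · have hu0 : u.val = 0 := by rw [hu]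
        have hltv : u.val < v.val := by omega
        refine ⟨hltv, huZ, hvZ, ?_⟩
        rw [hcharD u v Z hltv, hcharD' u v Z (by rw [hu, hσz, hσk v hv2]; omega)]
        have h1 := hCDz u v Z hu0 hv2
        have h2 := hCD'z u v Z hu0 hv2
        tauto
      · have hu1 : u.val = 1 := by rw [hu]
        have hltv : u.val < v.val := by omega
        refine ⟨hltv, huZ, hvZ, ?_⟩
        rw [hcharD u v Z hltv, hcharD' u v Z (by rw [hu, hσo, hσk v hv2]; omega)]
        have h1 := hCDo u v Z hu1
        have h2 := hCD'o u v Z hu1 hv2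
        tauto
  have hdist : dSepDist D D' = (univ.filter Q).card := by
    unfold dSepDist
    have hset : {t : Fin n × Fin n × Finset (Fin n) |
        t.1 < t.2.1 ∧ t.1 ∉ t.2.2 ∧ t.2.1 ∉ t.2.2 ∧
        ¬ (DSep D t.1 t.2.1 t.2.2 ↔ DSep D' t.1 t.2.1 t.2.2)} = ↑(univ.filter Q) := by
      ext ⟨u, v, Z⟩
      simp only [Set.mem_setOf_eq, coe_filter, mem_univ, true_and]
      exact hmain u v Z
    rw [hset, Set.ncard_coe_finset]
  set T0 : Fin n → Finset (Finset (Fin n)) := fun v =>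
    univ.filter (fun Z : Finset (Fin n) =>
      z ∉ Z ∧ v ∉ Z ∧ RR v Z ∧ (o ∈ Z ↔ ¬ IsColliderVertex D o)) with hT0
  set T1 : Fin n → Finset (Finset (Fin n)) := fun v =>
    univ.filter (fun Z : Finset (Fin n) =>
      o ∉ Z ∧ v ∉ Z ∧ RR v Z ∧ z ∈ Z) with hT1
  have hTeq : univ.filter Q = (univ.filter (fun v : Fin n => 2 ≤ v.val)).biUnion
      (fun v => (T0 v).image (fun Z => (z, v, Z)) ∪ (T1 v).image (fun Z => (o, v, Z))) := by
    ext ⟨u, v, Z⟩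
    simp only [mem_filter, mem_univ, true_and, mem_biUnion, mem_union, mem_image,
      hQdef, hT0, hT1]
    constructor
    · rintro ⟨hv2, huZ, hvZ, ⟨hu, hR, hoiff⟩ | ⟨hu, hR, hzZ⟩⟩
      · exact ⟨v, hv2, Or.inl ⟨Z, ⟨by rw [← hu]; exact huZ, hvZ, hR, hoiff⟩, by rw [hu]⟩⟩
      · exact ⟨v, hv2, Or.inr ⟨Z, ⟨by rw [← hu]; exact huZ, hvZ, hR, hzZ⟩, by rw [hu]⟩⟩
    · rintro ⟨v', hv2, ⟨Z', ⟨h1, h2, h3, h4⟩, heq⟩ | ⟨Z', ⟨h1, h2, h3, h4⟩, heq⟩⟩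
      · rw [Prod.ext_iff] at heq
        obtain ⟨hz1, heq2⟩ := heq
        rw [Prod.ext_iff] at heq2
        obtain ⟨hv1, hZ1⟩ := heq2
        subst hv1; subst hZ1; subst hz1
        exact ⟨hv2, h1, h2, Or.inl ⟨rfl, h3, h4⟩⟩
      · rw [Prod.ext_iff] at heq
        obtain ⟨hz1, heq2⟩ := heq
        rw [Prod.ext_iff] at heq2
        obtain ⟨hv1, hZ1⟩ := heq2
        subst hv1; subst hZ1; subst hz1
        exact ⟨hv2, h1, h2, Or.inr ⟨rfl, h3, h4⟩⟩
  have hcard0 : ∀ v : Fin n, 2 ≤ v.val → (T0 v).card = 2 ^ (n - 1 - v.val) := by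
    intro v hv
    have hFcard := SwapAux.card_le_filter (n := n) v
    set F : Finset (Fin n) := univ.filter (fun j : Fin n => j.val ≤ v.val) with hF
    set F0 : Finset (Fin n) := F.filter (fun j => (j = o ∧ ¬ IsColliderVertex D o) ∨
      (2 ≤ j.val ∧ j.val < v.val ∧ IsColliderVertex D j)) with hF0
    have hsub : F0 ⊆ F := filter_subset _ _
    have hiff : ∀ Z : Finset (Fin n),
        (z ∉ Z ∧ v ∉ Z ∧ RR v Z ∧ (o ∈ Z ↔ ¬ IsColliderVertex D o)) ↔ Z ∩ F = F0 := by
      intro Z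
      constructor
      · rintro ⟨h1, h2, h3, h4⟩
        ext j
        simp only [Finset.mem_inter, hF0, hF, Finset.mem_filter, Finset.mem_univ, true_and]
        constructor
        · rintro ⟨hjZ, hjle⟩
          refine ⟨hjle, ?_⟩
          rcases Nat.lt_or_ge j.val 2 with hj2 | hj2
          · rcases Nat.lt_or_ge j.val 1 with hj1 | hj1
            · exfalso; rw [hval0 j (by omega)] at hjZ; exact h1 hjZ
            · have hj1' : j = o := hval1 j (by omega)
              rw [hj1'] at hjZ
              exact Or.inl ⟨hj1', h4.1 hjZ⟩
          · have hjv : j.val < v.val := by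
              rcases Nat.lt_or_ge j.val v.val with h | h
              · exact h
              · exfalso
                have hjv' : j = v := Fin.ext (by omega)
                rw [hjv'] at hjZ
                exact h2 hjZ
            exact Or.inr ⟨hj2, hjv, (h3 j hj2 hjv).1 hjZ⟩
        · rintro ⟨hjle, ⟨hjo, hnc⟩ | ⟨hj2, hjv, hc⟩⟩
          · exact ⟨by rw [hjo]; exact h4.2 hnc, hjle⟩
          · exact ⟨(h3 j hj2 hjv).2 hc, hjle⟩
      · intro hZF
        have hmem2 : ∀ j : Fin n, j.val ≤ v.val →
            (j ∈ Z ↔ ((j = o ∧ ¬ IsColliderVertex D o) ∨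
              (2 ≤ j.val ∧ j.val < v.val ∧ IsColliderVertex D j))) := by
          intro j hj
          have hEq := Finset.ext_iff.1 hZF j
          simp only [Finset.mem_inter, hF0, hF, Finset.mem_filter, Finset.mem_univ,
            true_and] at hEq
          constructor
          · intro hjZ; exact (hEq.1 ⟨hjZ, hj⟩).2
          · intro hd; exact (hEq.2 ⟨hj, hd⟩).1
        refine ⟨?_, ?_, ?_, ?_⟩
        · intro h
          rcases (hmem2 z (by omega)).1 h with ⟨hzo', _⟩ | ⟨h2', _⟩
          · exact hzo hzo'
          · rw [hz0] at h2'; omega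
        · intro h
          rcases (hmem2 v le_rfl).1 h with ⟨hvo, _⟩ | ⟨_, hlt, _⟩
          · have := congrArg Fin.val hvo; rw [ho1] at this; omega
          · omega
        · intro k h2 hlt
          constructor
          · intro hkZ
            rcases (hmem2 k (by omega)).1 hkZ with ⟨hko, _⟩ | ⟨_, _, hc⟩
            · exfalso; have := congrArg Fin.val hko; rw [ho1] at this; omega
            · exact hc
          · intro hc
            exact (hmem2 k (by omega)).2 (Or.inr ⟨h2, hlt, hc⟩)
        · constructor
          · intro hoZ
            rcases (hmem2 o (by omega)).1 hoZ with ⟨_, hnc⟩ | ⟨h2', _⟩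
            · exact hnc
            · rw [ho1] at h2'; omega
          · intro hnc
            exact (hmem2 o (by omega)).2 (Or.inl ⟨rfl, hnc⟩)
    have hT0v : T0 v = univ.filter (fun Z : Finset (Fin n) => Z ∩ F = F0) := by
      rw [hT0]
      exact Finset.filter_congr (fun Z _ => hiff Z)
    rw [hT0v, SwapAux.card_forced F F0 hsub, hFcard]
    have hexp : n - (v.val + 1) = n - 1 - v.val := by omega
    rw [hexp]
  have hcard1 : ∀ v : Fin n, 2 ≤ v.val → (T1 v).card = 2 ^ (n - 1 - v.val) := by
    intro v hv
    have hFcard := SwapAux.card_le_filter (n := n) v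
    set F : Finset (Fin n) := univ.filter (fun j : Fin n => j.val ≤ v.val) with hF
    set F0 : Finset (Fin n) := F.filter (fun j => j = z ∨
      (2 ≤ j.val ∧ j.val < v.val ∧ IsColliderVertex D j)) with hF0
    have hsub : F0 ⊆ F := filter_subset _ _
    have hiff : ∀ Z : Finset (Fin n),
        (o ∉ Z ∧ v ∉ Z ∧ RR v Z ∧ z ∈ Z) ↔ Z ∩ F = F0 := by
      intro Z
      constructor
      · rintro ⟨h1, h2, h3, h4⟩
        ext j
        simp only [Finset.mem_inter, hF0, hF, Finset.mem_filter, Finset.mem_univ, true_and]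
        constructor
        · rintro ⟨hjZ, hjle⟩
          refine ⟨hjle, ?_⟩
          rcases Nat.lt_or_ge j.val 2 with hj2 | hj2
          · rcases Nat.lt_or_ge j.val 1 with hj1 | hj1
            · exact Or.inl (hval0 j (by omega))
            · exfalso
              rw [hval1 j (by omega)] at hjZ
              exact h1 hjZ
          · have hjv : j.val < v.val := by
              rcases Nat.lt_or_ge j.val v.val with h | h
              · exact h
              · exfalso
                have hjv' : j = v := Fin.ext (by omega)
                rw [hjv'] at hjZ
                exact h2 hjZ
            exact Or.inr ⟨hj2, hjv, (h3 j hj2 hjv).1 hjZ⟩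
        · rintro ⟨hjle, hjz | ⟨hj2, hjv, hc⟩⟩
          · exact ⟨by rw [hjz]; exact h4, hjle⟩
          · exact ⟨(h3 j hj2 hjv).2 hc, hjle⟩
      · intro hZF
        have hmem2 : ∀ j : Fin n, j.val ≤ v.val →
            (j ∈ Z ↔ (j = z ∨ (2 ≤ j.val ∧ j.val < v.val ∧ IsColliderVertex D j))) := by
          intro j hj
          have hEq := Finset.ext_iff.1 hZF j
          simp only [Finset.mem_inter, hF0, hF, Finset.mem_filter, Finset.mem_univ,
            true_and] at hEq
          constructor
          · intro hjZ; exact (hEq.1 ⟨hjZ, hj⟩).2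
          · intro hd; exact (hEq.2 ⟨hj, hd⟩).1
        refine ⟨?_, ?_, ?_, ?_⟩
        · intro h
          rcases (hmem2 o (by omega)).1 h with hoz | ⟨h2', _⟩
          · exact hzo hoz.symm
          · rw [ho1] at h2'; omega
        · intro h
          rcases (hmem2 v le_rfl).1 h with hvz | ⟨_, hlt, _⟩
          · have := congrArg Fin.val hvz; rw [hz0] at this; omega
          · omega
        · intro k h2 hlt
          constructor
          · intro hkZ
            rcases (hmem2 k (by omega)).1 hkZ with hkz | ⟨_, _, hc⟩
            · exfalso; have := congrArg Fin.val hkz; rw [hz0] at this; omega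
            · exact hc
          · intro hc
            exact (hmem2 k (by omega)).2 (Or.inr ⟨h2, hlt, hc⟩)
        · exact (hmem2 z (by omega)).2 (Or.inl rfl)
    have hT1v : T1 v = univ.filter (fun Z : Finset (Fin n) => Z ∩ F = F0) := by
      rw [hT1]
      exact Finset.filter_congr (fun Z _ => hiff Z)
    rw [hT1v, SwapAux.card_forced F F0 hsub, hFcard]
    have hexp : n - (v.val + 1) = n - 1 - v.val := by omega
    rw [hexp]
  have hdisj : ∀ a ∈ univ.filter (fun v : Fin n => 2 ≤ v.val),
      ∀ b ∈ univ.filter (fun v : Fin n => 2 ≤ v.val), a ≠ b →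
      Disjoint ((T0 a).image (fun Z => (z, a, Z)) ∪ (T1 a).image (fun Z => (o, a, Z)))
        ((T0 b).image (fun Z => (z, b, Z)) ∪ (T1 b).image (fun Z => (o, b, Z))) := by
    intro a _ b _ hab
    rw [Finset.disjoint_left]
    intro t ht ht'
    apply hab
    have h1 : t.2.1 = a := by
      rcases Finset.mem_union.1 ht with h | h <;>
        · obtain ⟨Z', _, heq⟩ := Finset.mem_image.1 h
          rw [← heq]
    have h2 : t.2.1 = b := by
      rcases Finset.mem_union.1 ht' with h | h <;>
        · obtain ⟨Z', _, heq⟩ := Finset.mem_image.1 h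
          rw [← heq]
    exact h1.symm.trans h2
  have hvcard : ∀ v ∈ univ.filter (fun v : Fin n => 2 ≤ v.val),
      ((T0 v).image (fun Z => (z, v, Z)) ∪ (T1 v).image (fun Z => (o, v, Z))).card
        = 2 * 2 ^ (n - 1 - v.val) := by
    intro v hv
    rw [Finset.mem_filter] at hv
    have hinj0 : Function.Injective (fun Z : Finset (Fin n) => ((z, v, Z) :
        Fin n × Fin n × Finset (Fin n))) := by
      intro a b h
      exact congrArg (fun t : Fin n × Fin n × Finset (Fin n) => t.2.2) h
    have hinj1 : Function.Injective (fun Z : Finset (Fin n) => ((o, v, Z) :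
        Fin n × Fin n × Finset (Fin n))) := by
      intro a b h
      exact congrArg (fun t : Fin n × Fin n × Finset (Fin n) => t.2.2) h
    have hdisj2 : Disjoint ((T0 v).image (fun Z => (z, v, Z)))
        ((T1 v).image (fun Z => (o, v, Z))) := by
      rw [Finset.disjoint_left]
      intro t ht ht'
      obtain ⟨Z1, _, heq1⟩ := Finset.mem_image.1 ht
      obtain ⟨Z2, _, heq2⟩ := Finset.mem_image.1 ht'
      apply hzo
      have e1 : t.1 = z := by rw [← heq1]
      have e2 : t.1 = o := by rw [← heq2]
      exact e1.symm.trans e2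
    rw [Finset.card_union_of_disjoint hdisj2, Finset.card_image_of_injective _ hinj0,
      Finset.card_image_of_injective _ hinj1, hcard0 v hv.2, hcard1 v hv.2]
    omega
  rw [hdist, hTeq, Finset.card_biUnion hdisj, Finset.sum_congr rfl hvcard,
    Finset.sum_filter]
  rw [Fin.sum_univ_eq_sum_range (fun i => if 2 ≤ i then 2 * 2 ^ (n - 1 - i) else 0) n]
  rw [← Finset.sum_range_reflect (fun i => if 2 ≤ i then 2 * 2 ^ (n - 1 - i) else 0) n]
  have hcongr2 : ∀ j ∈ Finset.range n,
      (if 2 ≤ n - 1 - j then 2 * 2 ^ (n - 1 - (n - 1 - j)) else 0)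
        = (if j < n - 2 then 2 * 2 ^ j else 0) := by
    intro j hj
    rw [Finset.mem_range] at hj
    by_cases h : 2 ≤ n - 1 - j
    · rw [if_pos h, if_pos (by omega)]
      have hjj : n - 1 - (n - 1 - j) = j := by omega
      rw [hjj]
    · rw [if_neg h, if_neg (by omega)]
  rw [Finset.sum_congr rfl hcongr2, ← Finset.sum_filter]
  have hfilt : (Finset.range n).filter (fun j => j < n - 2) = Finset.range (n - 2) := by
    ext j
    simp only [Finset.mem_filter, Finset.mem_range]
    omega
  rw [hfilt, ← Finset.mul_sum, SwapAux.geo_sum]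
  have h1 : 2 ^ (n - 1) = 2 ^ (n - 2) * 2 := by
    rw [← pow_succ]
    congr 1
    omega
  have h2 : 1 ≤ 2 ^ (n - 2) := Nat.one_le_two_pow
  omega
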